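/- Let τ > 0 and λ ∈ ℂ with Re λ < 0. Then the Laguerre coefficients for α = 0 satisfy the recursion s_{0,τ,0,λ} = −2√τ/(2λ−τ) and s_{n+1,τ,0,λ} = ((2λ+τ)/(2λ−τ)) · s_{n,τ,0,λ} for all n ∈ ℕ. -/

import Mathlib

open MeasureTheory

/-- The (ordinary) Laguerre polynomial `L_n(t) = ∑_{k=0}^n (-1)^k (n!/((k!)²(n-k)!)) t^k`. -/
noncomputable def ordLagPoly (n : ℕ) (t : ℝ) : ℝ :=
  ∑ k ∈ Finset.range (n + 1),
    (-1 : ℝ) ^ k * ((n.factorial : ℝ) / ((k.factorial : ℝ) ^ 2 * (n - k).factorial)) * t ^ k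

/-- The Laguerre function `l_{n,τ}(t) = √τ e^{-τt/2} L_n(τt)`. -/
noncomputable def ordLagFun (τ : ℝ) (n : ℕ) (t : ℝ) : ℝ :=
  Real.sqrt τ * Real.exp (-τ * t / 2) * ordLagPoly n (τ * t)

/-- The Laguerre coefficient `s_{n,τ,0,λ} = ∫₀^∞ e^{λ t} l_{n,τ}(t) dt`. -/
noncomputable def ordLagCoef (τ : ℝ) (n : ℕ) (z : ℂ) : ℂ :=
  ∫ t in Set.Ioi (0 : ℝ), Complex.exp (z * t) * (ordLagFun τ n t : ℂ)

open Set Filter Topology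


lemma auxA_tendsto_real (m : ℕ) {b : ℝ} (hb : b < 0) :
    Tendsto (fun x : ℝ => x ^ m * Real.exp (b * x)) atTop (𝓝 0) := by
  have h1 : Tendsto (fun x : ℝ => -b * x) atTop atTop :=
    Tendsto.const_mul_atTop (by linarith) tendsto_id
  have h2 := ((Real.tendsto_pow_mul_exp_neg_atTop_nhds_zero m).comp h1).const_mul ((-b)⁻¹ ^ m)
  rw [mul_zero] at h2
  refine h2.congr fun x => ?_
  simp only [Function.comp_apply]
  rw [neg_mul, neg_neg, show -(b*x) = -b * x by ring, mul_pow]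
  have hb' : (-b) ^ m ≠ 0 := pow_ne_zero _ (by linarith)
  field_simp
  ring_nf
  rw [← mul_pow, mul_inv_cancel₀ (by linarith : b ≠ 0), one_pow, one_mul, pow_mul']
  simp

lemma auxA_tendsto (m : ℕ) {w : ℂ} (hw : w.re < 0) :
    Tendsto (fun x : ℝ => (x : ℂ) ^ m * Complex.exp (w * x)) atTop (𝓝 0) := by
  rw [tendsto_zero_iff_norm_tendsto_zero]
  have h := auxA_tendsto_real m hw
  refine h.congr' ?_
  filter_upwards [eventually_gt_atTop (0:ℝ)] with x hx
  rw [norm_mul, norm_pow, Complex.norm_exp, Complex.norm_real, Real.norm_eq_abs,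
    abs_of_pos hx]
  congr 2
  simp [Complex.mul_re]

lemma auxA_integrable (m : ℕ) {w : ℂ} (hw : w.re < 0) :
    IntegrableOn (fun x : ℝ => (x : ℂ) ^ m * Complex.exp (w * x)) (Ioi 0) := by
  have hg : IntegrableOn (fun x : ℝ => x ^ m * Real.exp (w.re * x)) (Ioi 0) := by
    have := integrableOn_rpow_mul_exp_neg_mul_rpow (p := 1) (s := (m:ℝ)) (b := -w.re)
      (by exact_mod_cast neg_one_lt_zero.trans_le m.cast_nonneg) one_pos (by linarith)
    refine this.congr_fun (fun x hx => ?_) measurableSet_Ioi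
    rw [mem_Ioi] at hx
    dsimp only
    rw [Real.rpow_natCast, Real.rpow_one]; ring_nf
  refine Integrable.mono' hg ?_ ?_
  · exact (Continuous.aestronglyMeasurable (by continuity)).restrict
  · filter_upwards [ae_restrict_mem measurableSet_Ioi] with x hx
    rw [mem_Ioi] at hx
    rw [norm_mul, norm_pow, Complex.norm_exp, Complex.norm_real, Real.norm_eq_abs,
      abs_of_pos hx]
    apply le_of_eq; congr 1; simp [Complex.mul_re]

lemma auxA_integral (m : ℕ) {w : ℂ} (hw : w.re < 0) :
    ∫ x in Ioi (0:ℝ), (x : ℂ) ^ m * Complex.exp (w * x) = m.factorial / (-w) ^ (m + 1) := by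
  have hw0 : w ≠ 0 := fun h => by simp [h] at hw
  have hvderiv : ∀ x : ℝ, HasDerivAt (fun y : ℝ => w⁻¹ * Complex.exp (w * y))
      (Complex.exp (w * x)) x := by
    intro x
    have h2 := ((((hasDerivAt_id (x : ℂ)).const_mul w).cexp).const_mul w⁻¹).comp_ofReal
    simp only [id_eq, mul_one] at h2
    convert h2 using 1
    field_simp
  induction m with
  | zero =>
    have := integral_Ioi_of_hasDerivAt_of_tendsto' (a := 0)
      (f := fun y : ℝ => w⁻¹ * Complex.exp (w * y)) (fun x _ => hvderiv x)
      ((auxA_integrable 0 hw).congr_fun (fun x _ => by simp) measurableSet_Ioi)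
      (m := 0) (by simpa using (auxA_tendsto 0 hw).const_mul w⁻¹)
    simp only [Complex.ofReal_zero, mul_zero, Complex.exp_zero, mul_one, zero_sub] at this
    calc ∫ x in Ioi (0:ℝ), (x : ℂ) ^ 0 * Complex.exp (w * x)
        = ∫ x in Ioi (0:ℝ), Complex.exp (w * x) := by
          refine setIntegral_congr_fun measurableSet_Ioi fun x _ => by simp
      _ = -w⁻¹ := this
      _ = _ := by simp [pow_one]
  | succ m ih =>
    have hu : ∀ x ∈ Ioi (0:ℝ), HasDerivAt (fun y : ℝ => ((y : ℂ)) ^ (m+1))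
        ((((m:ℂ)+1) * (x:ℂ) ^ m)) x := by
      intro x _
      have := (hasDerivAt_pow (m+1) (x : ℂ)).comp_ofReal
      simpa using this
    have key := integral_Ioi_mul_deriv_eq_deriv_mul (a := 0)
      (u := fun y : ℝ => ((y : ℂ)) ^ (m+1)) (u' := fun x : ℝ => ((m:ℂ)+1) * (x:ℂ) ^ m)
      (v := fun y : ℝ => w⁻¹ * Complex.exp (w * y)) (v' := fun x : ℝ => Complex.exp (w * x))
      hu (fun x _ => hvderiv x)
      ((auxA_integrable (m+1) hw).congr (Filter.Eventually.of_forall fun x => by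
        simp only [Pi.mul_apply]))
      (((auxA_integrable m hw).const_mul (((m:ℂ)+1) * w⁻¹)).congr
        (Filter.Eventually.of_forall fun x => by simp only [Pi.mul_apply]; ring))
      (a' := 0) ?_ (b' := 0) ?_
    · rw [key]
      have : ∫ x in Ioi (0:ℝ), ((m:ℂ)+1) * (x:ℂ) ^ m * (w⁻¹ * Complex.exp (w * x))
          = (((m:ℂ)+1) * w⁻¹) * ∫ x in Ioi (0:ℝ), (x:ℂ) ^ m * Complex.exp (w * x) := by
        rw [← integral_const_mul]
        exact setIntegral_congr_fun measurableSet_Ioi fun x _ => by ring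
      rw [this, ih]
      have hfac : ((m+1).factorial : ℂ) = ((m:ℂ)+1) * (m.factorial : ℂ) := by
        push_cast [Nat.factorial_succ]; ring
      rw [hfac]
      have hnw : (-w) ≠ 0 := neg_ne_zero.mpr hw0
      field_simp
      rw [show (-w) ^ (m+1+1) = (-w) ^ (m+1) * (-w) by ring]
      ring
    · -- tendsto at 0⁺
      have hc : Continuous (fun y : ℝ => ((y:ℂ)) ^ (m+1) * (w⁻¹ * Complex.exp (w * y))) := by
        continuity
      have h3 : Tendsto (fun y : ℝ => ((y:ℂ)) ^ (m+1) * (w⁻¹ * Complex.exp (w * y)))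
          (𝓝[>] (0:ℝ)) (𝓝 (((0:ℝ):ℂ) ^ (m+1) * (w⁻¹ * Complex.exp (w * (0:ℝ))))) :=
        (hc.tendsto 0).mono_left nhdsWithin_le_nhds
      simpa [Pi.mul_def] using h3
    · -- tendsto at ∞
      have := (auxA_tendsto (m+1) hw).const_mul w⁻¹
      rw [mul_zero] at this
      refine this.congr fun x => ?_
      simp only [Pi.mul_apply]
      ring

lemma ordLagCoef_closed (τ : ℝ) (hτ : 0 < τ) (z : ℂ) (hz : z.re < 0) (n : ℕ) :
    ordLagCoef τ n z = -2 * (Real.sqrt τ : ℂ) / (2 * z - τ) * ((2*z+τ)/(2*z-τ))^n := by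
  set w : ℂ := z - τ/2 with hwdef
  have hwre : w.re < 0 := by
    have hre : ((τ:ℂ)/2).re = τ/2 := by
      rw [show (τ:ℂ)/2 = ((τ/2 : ℝ) : ℂ) by push_cast; ring, Complex.ofReal_re]
    have : w.re = z.re - τ/2 := by rw [hwdef, Complex.sub_re, hre]
    rw [this]; linarith
  have hw0 : w ≠ 0 := fun h => by simp [h] at hwre
  have key : ∀ t : ℝ, Complex.exp (z*t) * ((ordLagFun τ n t : ℝ) : ℂ)
      = ∑ k ∈ Finset.range (n+1),
        ((Real.sqrt τ : ℂ) * ((-1)^k * (n.factorial : ℂ) /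
          ((k.factorial : ℂ)^2 * ((n-k).factorial : ℂ)) * (τ:ℂ)^k))
          * ((t:ℂ)^k * Complex.exp (w*t)) := by
    intro t
    have hexp : Complex.exp (w * t) = Complex.exp (z * t) * Complex.exp (-(τ:ℂ) * t / 2) := by
      rw [← Complex.exp_add]; congr 1; rw [hwdef]; ring
    unfold ordLagFun ordLagPoly
    push_cast
    rw [Finset.mul_sum, Finset.mul_sum]
    refine Finset.sum_congr rfl fun k hk => ?_
    rw [hexp]
    ring
  rw [ordLagCoef]
  simp_rw [key]
  rw [MeasureTheory.integral_finset_sum _ (fun k _ => ((auxA_integrable k hwre).const_mul _))]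
  simp_rw [MeasureTheory.integral_const_mul, auxA_integral _ hwre]
  have h2z : 2*z - (τ:ℂ) = 2*w := by rw [hwdef]; ring
  have h2z' : 2*z + (τ:ℂ) = 2*(w+τ) := by rw [hwdef]; ring
  rw [h2z, h2z', mul_div_mul_left _ _ (two_ne_zero)]
  have hfrac : (w + τ)/w = (τ:ℂ)/w + 1 := by field_simp; ring
  have hRHS : -2 * (Real.sqrt τ : ℂ)/(2*w) = -(Real.sqrt τ : ℂ)/w := by
    field_simp
  rw [hfrac, hRHS, add_pow, Finset.mul_sum]
  refine Finset.sum_congr rfl fun k hk => ?_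
  have hkn : k ≤ n := Nat.lt_succ_iff.mp (Finset.mem_range.mp hk)
  have hch : (n.factorial : ℂ) = (n.choose k : ℂ) * (k.factorial : ℂ) * ((n-k).factorial : ℂ) := by
    exact_mod_cast (Nat.choose_mul_factorial_mul_factorial hkn).symm
  have hnegpow : (-w)^(k+1) = (-1:ℂ)^k * (-1) * w^(k+1) := by
    rw [neg_pow, pow_succ]
  rw [hch, hnegpow, one_pow]
  have hk0 : (k.factorial : ℂ) ≠ 0 := Nat.cast_ne_zero.mpr k.factorial_ne_zero
  have hnk0 : ((n-k).factorial : ℂ) ≠ 0 := Nat.cast_ne_zero.mpr (n-k).factorial_ne_zero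
  have he : ((-1:ℂ))^k ≠ 0 := pow_ne_zero _ (by norm_num)
  have hwk : w^(k+1) ≠ 0 := pow_ne_zero _ hw0
  field_simp
  ring_nf
  rw [inv_pow, mul_assoc _ (w^k), mul_inv_cancel₀ (pow_ne_zero _ hw0), mul_one]

theorem ordLagCoef_recursion (τ : ℝ) (hτ : 0 < τ) (z : ℂ) (hz : z.re < 0) :
    ordLagCoef τ 0 z = -2 * (Real.sqrt τ : ℂ) / (2 * z - τ) ∧
      ∀ n : ℕ, ordLagCoef τ (n + 1) z =
        (2 * z + τ) / (2 * z - τ) * ordLagCoef τ n z := by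
  constructor
  · rw [ordLagCoef_closed τ hτ z hz 0, pow_zero, mul_one]
  · intro n
    rw [ordLagCoef_closed τ hτ z hz (n+1), ordLagCoef_closed τ hτ z hz n, pow_succ]
    ring
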